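/- Let D be a squarefree positive integer and let r, s, t be integers with gcd(r, s) = 1 and r*(r + s*D)*(r - s*D) = t^2. Let D_0 = gcd(r, D). Then D_0^2 divides t. -/

import Mathlib

/-- Descent step: if `gcd(r,s) = 1`, `D` is squarefree positive and
`r(r+sD)(r-sD) = t^2`, then `gcd(r,D)^2 ∣ t`. -/
theorem gcd_sq_dvd (D r s t : ℤ) (hD : 0 < D) (hsf : Squarefree D)
    (hrs : IsCoprime r s)
    (ht : r * (r + s * D) * (r - s * D) = t ^ 2) :
    ((Int.gcd r D : ℤ)) ^ 2 ∣ t := by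
  set d : ℤ := (Int.gcd r D : ℤ) with hd
  have hdr : d ∣ r := Int.gcd_dvd_left r D
  have hdD : d ∣ D := Int.gcd_dvd_right r D
  have hdsf : Squarefree d := hsf.squarefree_of_dvd hdD
  have hdne : d ≠ 0 := by
    intro h
    rw [hd, Int.natCast_eq_zero, Int.gcd_eq_zero_iff] at h
    exact hD.ne' h.2
  have h3 : d ^ 3 ∣ t ^ 2 := by
    rw [← ht]
    have h1 : d ∣ r + s * D := dvd_add hdr (hdD.mul_left s)
    have h2 : d ∣ r - s * D := dvd_sub hdr (hdD.mul_left s)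
    calc d ^ 3 = d * d * d := by ring
      _ ∣ r * (r + s * D) * (r - s * D) := mul_dvd_mul (mul_dvd_mul hdr h1) h2
  have hd1 : d ∣ t :=
    (hdsf.dvd_pow_iff_dvd (two_ne_zero)).mp ((dvd_pow_self d (by norm_num : (3:ℕ) ≠ 0)).trans h3)
  obtain ⟨u, hu⟩ := hd1
  have hdu : d ∣ u := by
    have : d ^ 2 * d ∣ d ^ 2 * u ^ 2 := by
      have : d ^ 3 ∣ d ^ 2 * u ^ 2 := by rw [← mul_pow, ← hu]; exact h3
      calc d ^ 2 * d = d ^ 3 := by ring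
        _ ∣ d ^ 2 * u ^ 2 := this
    have := (mul_dvd_mul_iff_left (pow_ne_zero 2 hdne)).mp this
    exact (hdsf.dvd_pow_iff_dvd two_ne_zero).mp this
  obtain ⟨v, hv⟩ := hdu
  exact ⟨v, by rw [hu, hv]; ring⟩
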